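/- Let Γ be a finite labeled graph. Iterating folding and trimming operations on Γ terminates after finitely many steps in a folded core graph Core(Γ), and the resulting graph is independent of the order in which foldings and trimmings are performed. -/

import Mathlib

/-! Framework: Serre graphs with labels in `X ∪ X⁻¹` (encoded as `X × Bool`),
labeled-graph morphisms, paths, `π₁` as a set of elements of the free group,
folded graphs, core graphs, folding/trimming steps, edge subdivision along a
homomorphism (the functor `F_φ`), Whitehead graphs and the category FGR. -/

/-- A graph in the sense of Serre together with an `X`-labeling. -/
structure LGraph (X : Type) : Type 1 where
  V : Type
  E : Type
  init : E → V
  bar : E → E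
  bar_ne : ∀ e, bar e ≠ e
  bar_bar : ∀ e, bar (bar e) = e
  lab : E → X × Bool
  lab_bar : ∀ e, lab (bar e) = ((lab e).1, !(lab e).2)

namespace LGraph

variable {X : Type}

/-- Terminal vertex of an edge. -/
def term (Γ : LGraph X) (e : Γ.E) : Γ.V := Γ.init (Γ.bar e)

/-- The label of an edge as an element of the free group. -/
def labF (Γ : LGraph X) (e : Γ.E) : FreeGroup X :=
  cond (Γ.lab e).2 (FreeGroup.of (Γ.lab e).1) ((FreeGroup.of (Γ.lab e).1)⁻¹)

/-- `Γ.chain v p`: the list of edges `p` is a path starting at `v`. -/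
def chain (Γ : LGraph X) : Γ.V → List Γ.E → Prop
  | _, [] => True
  | v, e :: p => Γ.init e = v ∧ chain Γ (Γ.term e) p

/-- Endpoint of a path starting at `v`. -/
def endOf (Γ : LGraph X) (v : Γ.V) (p : List Γ.E) : Γ.V :=
  p.foldl (fun _ e => Γ.term e) v

/-- Label of a path, as an element of the free group. -/
def pathLabel (Γ : LGraph X) (p : List Γ.E) : FreeGroup X :=
  (p.map Γ.labF).prod

/-- A path is reduced if it never immediately backtracks. -/
def Reduced (Γ : LGraph X) (p : List Γ.E) : Prop :=
  p.Chain' (fun e f => f ≠ Γ.bar e)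

/-- `π₁` of a graph at a base vertex: labels of closed paths at `v`. -/
def pi1 (Γ : LGraph X) (v : Γ.V) : Set (FreeGroup X) :=
  { g | ∃ p, Γ.chain v p ∧ Γ.endOf v p = v ∧ Γ.pathLabel p = g }

/-- A labeled graph is folded if distinct edges with a common initial vertex
have distinct labels. -/
def Folded (Γ : LGraph X) : Prop :=
  ∀ e f : Γ.E, Γ.init e = Γ.init f → Γ.lab e = Γ.lab f → e = f

/-- Connectivity. -/
def Connected (Γ : LGraph X) : Prop :=
  ∀ v w : Γ.V, ∃ p, Γ.chain v p ∧ Γ.endOf v p = w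

/-- An (unpointed) core graph: folded, connected, every edge lies on a
reduced circuit (reduced closed path which is also cyclically reduced). -/
def IsUCore (Γ : LGraph X) : Prop :=
  Γ.Folded ∧ Γ.Connected ∧
    ∀ e : Γ.E, ∃ v p, Γ.chain v p ∧ Γ.endOf v p = v ∧ Γ.Reduced p ∧
      (∀ e₁ eₙ, p.head? = some e₁ → p.getLast? = some eₙ → e₁ ≠ Γ.bar eₙ) ∧ e ∈ p

end LGraph

/-- Formal inverse of a letter in `X ∪ X⁻¹`. -/
def letterInv {X : Type} (a : X × Bool) : X × Bool := (a.1, !a.2)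

namespace LGraph

variable {X : Type}

/-- A 2-path: a pair of consecutive edges `(e, f)` with `f ≠ ē`. -/
def TwoPath (Γ : LGraph X) (e f : Γ.E) : Prop :=
  Γ.init f = Γ.term e ∧ f ≠ Γ.bar e

/-- The Whitehead graph of a labeled graph, as a set of unordered pairs of
letters: the pairs `{l(e), l(f̄)}` over 2-paths `(e, f)`. -/
def W (Γ : LGraph X) : Set (Sym2 (X × Bool)) :=
  { s | ∃ e f, Γ.TwoPath e f ∧ s = Sym2.mk (Γ.lab e) (letterInv (Γ.lab f)) }

end LGraph

/-- The full Whitehead graph on `X`: all non-diagonal unordered pairs. -/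
def FullW (X : Type) : Set (Sym2 (X × Bool)) := { s | ¬ s.IsDiag }

/-- Morphism of labeled graphs. -/
structure LHom {X : Type} (Γ Δ : LGraph X) where
  mapV : Γ.V → Δ.V
  mapE : Γ.E → Δ.E
  map_init : ∀ e, Δ.init (mapE e) = mapV (Γ.init e)
  map_bar : ∀ e, Δ.bar (mapE e) = mapE (Γ.bar e)
  map_lab : ∀ e, Δ.lab (mapE e) = Γ.lab e

/-- Pointed labeled graph. -/
structure PLGraph (X : Type) extends LGraph X where
  base : V

/-- Morphism of pointed labeled graphs. -/
structure PHom {X : Type} (Γ Δ : PLGraph X) extends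
    LHom Γ.toLGraph Δ.toLGraph where
  map_base : mapV Γ.base = Δ.base

namespace PLGraph

variable {X : Type}

/-- `π₁` of a pointed graph at its base point. -/
def pi1S (Γ : PLGraph X) : Set (FreeGroup X) := Γ.toLGraph.pi1 Γ.base

/-- A pointed core graph: folded, connected, and every edge lies on a reduced
closed path through the base point. -/
def IsCore (Γ : PLGraph X) : Prop :=
  Γ.toLGraph.Folded ∧ Γ.toLGraph.Connected ∧
    ∀ e : Γ.E, ∃ p, Γ.toLGraph.chain Γ.base p ∧
      Γ.toLGraph.endOf Γ.base p = Γ.base ∧ Γ.toLGraph.Reduced p ∧ e ∈ p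

end PLGraph

/-- `Δ` is obtained from `Γ` by one folding: identifying two distinct edges
`e₁, e₂` with the same initial vertex and the same label (and their inverses,
and their terminal vertices). -/
structure FoldStep {X : Type} (Γ Δ : LGraph X) where
  f : LHom Γ Δ
  e₁ : Γ.E
  e₂ : Γ.E
  ne : e₁ ≠ e₂
  init_eq : Γ.init e₁ = Γ.init e₂
  lab_eq : Γ.lab e₁ = Γ.lab e₂
  surjV : Function.Surjective f.mapV
  surjE : Function.Surjective f.mapE
  glueE : f.mapE e₁ = f.mapE e₂
  injE : ∀ d d', f.mapE d = f.mapE d' →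
    d = d' ∨ ({d, d'} : Set Γ.E) = {e₁, e₂} ∨
      ({d, d'} : Set Γ.E) = {Γ.bar e₁, Γ.bar e₂}
  injV : ∀ v w, f.mapV v = f.mapV w →
    v = w ∨ ({v, w} : Set Γ.V) = {Γ.term e₁, Γ.term e₂}

/-- `Δ` is obtained from `Γ` by one trimming: deleting a degree-one vertex
`v` together with its edge pair `{e, ē}`; `j` is the inclusion of `Δ` in `Γ`. -/
structure TrimStep {X : Type} (Γ Δ : LGraph X) where
  j : LHom Δ Γ
  v : Γ.V
  e : Γ.E
  init_e : Γ.init e = v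
  deg_one : ∀ d, Γ.init d = v → d = e
  injV : Function.Injective j.mapV
  injE : Function.Injective j.mapE
  rangeV : Set.range j.mapV = {w | w ≠ v}
  rangeE : Set.range j.mapE = {d | d ≠ e ∧ d ≠ Γ.bar e}

/-- Pointed folding step. -/
def PFold {X : Type} (Γ Δ : PLGraph X) : Prop :=
  ∃ F : FoldStep Γ.toLGraph Δ.toLGraph, F.f.mapV Γ.base = Δ.base

/-- Pointed trimming step (the trimmed vertex is not the base point). -/
def PTrim {X : Type} (Γ Δ : PLGraph X) : Prop :=
  ∃ T : TrimStep Γ.toLGraph Δ.toLGraph, T.v ≠ Γ.base ∧ T.j.mapV Δ.base = Γ.base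

/-- One folding or trimming step on pointed graphs. -/
def PStep {X : Type} (Γ Δ : PLGraph X) : Prop := PFold Γ Δ ∨ PTrim Γ Δ

/-- One folding or trimming step on unpointed graphs. -/
def UStep {X : Type} (Γ Δ : LGraph X) : Prop :=
  Nonempty (FoldStep Γ Δ) ∨ Nonempty (TrimStep Γ Δ)

/-- `Δ` is the subdivision of the `Y`-labeled graph `Γ` along
`φ : Y → FreeGroup X`: each edge `e` is replaced by a fresh path spelling the
reduced word of `φ` applied to the label of `e` (the functor `F_φ`). -/
structure Subdiv {Y X : Type} [DecidableEq X] (φ : Y → FreeGroup X)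
    (Γ : LGraph Y) (Δ : LGraph X) where
  vmap : Γ.V → Δ.V
  emap : Γ.E → List Δ.E
  vmap_inj : Function.Injective vmap
  emap_ne : ∀ e, emap e ≠ []
  emap_chain : ∀ e, Δ.chain (vmap (Γ.init e)) (emap e)
  emap_end : ∀ e, Δ.endOf (vmap (Γ.init e)) (emap e) = vmap (Γ.term e)
  emap_bar : ∀ e, emap (Γ.bar e) = ((emap e).reverse).map Δ.bar
  emap_spell : ∀ e, (emap e).map Δ.lab = (FreeGroup.lift φ (Γ.labF e)).toWord
  emap_nodup : ∀ e, (emap e).Nodup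
  emap_nobar : ∀ e d, d ∈ emap e → Δ.bar d ∉ emap e
  emap_disj : ∀ e e', e' ≠ e → e' ≠ Γ.bar e → ∀ d, d ∈ emap e → d ∉ emap e'
  cover_e : ∀ d : Δ.E, ∃ e, d ∈ emap e
  interior : ∀ w : Δ.V, w ∉ Set.range vmap →
    ∃ d₁ d₂ : Δ.E, d₁ ≠ d₂ ∧ Δ.init d₁ = w ∧ Δ.init d₂ = w ∧
      ∀ d, Δ.init d = w → d = d₁ ∨ d = d₂

/-- Whitehead pairs read along a word: `{wᵢ, wᵢ₊₁⁻¹}` over consecutive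
letters. -/
def wordW {X : Type} (l : List (X × Bool)) : Set (Sym2 (X × Bool)) :=
  { s | ∃ l₁ a b l₂, l = l₁ ++ a :: b :: l₂ ∧ s = Sym2.mk a (letterInv b) }

/-- The image of a letter under (the extension of) `φ`. -/
def letterIm {Y X : Type} (φ : Y → FreeGroup X) (a : Y × Bool) : FreeGroup X :=
  cond a.2 (φ a.1) (φ a.1)⁻¹

/-- A morphism in the category FGR of free groups with restrictions, from
`(Y, N)` to `(X, M)`: a non-degenerate homomorphism `F_Y → F_X` (given on the
basis `Y`) satisfying conditions (i)–(iv). -/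
structure FGRHom (Y X : Type) [DecidableEq X] (N : Set (Sym2 (Y × Bool)))
    (M : Set (Sym2 (X × Bool))) where
  φ : Y → FreeGroup X
  nondeg : ∀ y, φ y ≠ 1
  whitehead : ∀ y, wordW (φ y).toWord ⊆ M
  lastLetter : ∀ a b : Y × Bool, Sym2.mk a b ∈ N →
    ∃ ta tb, (letterIm φ a).toWord.getLast? = some ta ∧
      (letterIm φ b).toWord.getLast? = some tb ∧ ta ≠ tb ∧ Sym2.mk ta tb ∈ M

/-- No cancellation in the product of two (reduced) words. -/
def NoCancel {X : Type} [DecidableEq X] (p q : FreeGroup X) : Prop :=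
  (p * q).toWord = p.toWord ++ q.toWord

/-- A word is cyclically reduced: its last letter is not the inverse of its
first letter. -/
def CycRed {X : Type} [DecidableEq X] (w : FreeGroup X) : Prop :=
  ∀ a b, w.toWord.head? = some a → w.toWord.getLast? = some b → b ≠ (a.1, !a.2)

/-! ### Auxiliary library for the proof of Statement 18 -/

section FGAux
variable {X : Type}

/-- no cancellation between adjacent letters -/
def NR (L : List (X × Bool)) : Prop :=
  L.Chain' (fun a b => ¬(a.1 = b.1 ∧ a.2 = !b.2))

lemma reduce_eq_self [DecidableEq X] {L : List (X × Bool)} (h : NR L) :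
    FreeGroup.reduce L = L := by
  induction L with
  | nil => rfl
  | cons x L ih =>
    have hL : NR L := (List.isChain_cons.mp h).2
    rw [FreeGroup.reduce.cons, ih hL]
    cases L with
    | nil => rfl
    | cons hd tl =>
      have : ¬(x.1 = hd.1 ∧ x.2 = !hd.2) := (List.isChain_cons_cons.mp h).1
      simp only [this, if_false]

lemma mk_inj_of_NR {L L' : List (X × Bool)} (h : NR L) (h' : NR L')
    (e : FreeGroup.mk L = FreeGroup.mk L') : L = L' := by
  classical
  have := FreeGroup.reduce.sound e
  rwa [reduce_eq_self h, reduce_eq_self h'] at this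

lemma not_chain'_decomp {α : Type*} {R : α → α → Prop} :
    ∀ {l : List α}, ¬l.Chain' R → ∃ l₁ a b l₂, l = l₁ ++ a :: b :: l₂ ∧ ¬ R a b := by
  intro l
  induction l with
  | nil => intro h; exact absurd List.isChain_nil h
  | cons x l ih =>
    intro h
    cases l with
    | nil => exact absurd (List.isChain_singleton x) h
    | cons y t =>
      rw [List.Chain', List.isChain_cons_cons] at h
      push_neg at h
      by_cases hxy : R x y
      · obtain ⟨l₁, a, b, l₂, hl, hR⟩ := ih (h hxy)
        exact ⟨x :: l₁, a, b, l₂, by rw [hl]; rfl, hR⟩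
      · exact ⟨[], x, y, t, rfl, hxy⟩
end FGAux

namespace LGraph

variable {X : Type} {Γ : LGraph X}

@[simp] lemma chain_nil (v : Γ.V) : Γ.chain v [] := trivial

@[simp] lemma chain_cons {v : Γ.V} {e : Γ.E} {p : List Γ.E} :
    Γ.chain v (e :: p) ↔ Γ.init e = v ∧ Γ.chain (Γ.term e) p := Iff.rfl

@[simp] lemma endOf_nil (v : Γ.V) : Γ.endOf v [] = v := rfl

@[simp] lemma endOf_cons (v : Γ.V) (e : Γ.E) (p : List Γ.E) :
    Γ.endOf v (e :: p) = Γ.endOf (Γ.term e) p := rfl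

lemma endOf_append (v : Γ.V) (p q : List Γ.E) :
    Γ.endOf v (p ++ q) = Γ.endOf (Γ.endOf v p) q := by
  simp [LGraph.endOf, List.foldl_append]

lemma chain_append {v : Γ.V} {p q : List Γ.E} :
    Γ.chain v (p ++ q) ↔ Γ.chain v p ∧ Γ.chain (Γ.endOf v p) q := by
  induction p generalizing v with
  | nil => simp
  | cons e p ih => simp [ih, and_assoc]

@[simp] lemma pathLabel_nil : Γ.pathLabel [] = 1 := rfl

lemma pathLabel_cons (e : Γ.E) (p : List Γ.E) :
    Γ.pathLabel (e :: p) = Γ.labF e * Γ.pathLabel p := by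
  simp [LGraph.pathLabel]

lemma pathLabel_append (p q : List Γ.E) :
    Γ.pathLabel (p ++ q) = Γ.pathLabel p * Γ.pathLabel q := by
  simp [LGraph.pathLabel]

@[simp] lemma bar_inj {e f : Γ.E} : Γ.bar e = Γ.bar f ↔ e = f := by
  constructor
  · intro h; have := congrArg Γ.bar h; simpa [Γ.bar_bar] using this
  · rintro rfl; rfl

@[simp] lemma term_bar (e : Γ.E) : Γ.term (Γ.bar e) = Γ.init e := by
  simp [LGraph.term, Γ.bar_bar]

lemma labF_bar (e : Γ.E) : Γ.labF (Γ.bar e) = (Γ.labF e)⁻¹ := by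
  simp only [LGraph.labF, Γ.lab_bar]
  cases h : (Γ.lab e).2 <;> simp

/-- bar-reverse of a path. -/
def barRev (Γ : LGraph X) (p : List Γ.E) : List Γ.E := (p.map Γ.bar).reverse

@[simp] lemma barRev_nil : Γ.barRev [] = [] := rfl

lemma barRev_cons (e : Γ.E) (p : List Γ.E) :
    Γ.barRev (e :: p) = Γ.barRev p ++ [Γ.bar e] := by
  simp [barRev]

lemma chain_barRev {v : Γ.V} {p : List Γ.E} (h : Γ.chain v p) :
    Γ.chain (Γ.endOf v p) (Γ.barRev p) ∧ Γ.endOf (Γ.endOf v p) (Γ.barRev p) = v := by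
  induction p generalizing v with
  | nil => simp
  | cons e p ih =>
    obtain ⟨he, hp⟩ := h
    obtain ⟨hc, hend⟩ := ih hp
    rw [barRev_cons]
    constructor
    · rw [endOf_cons, chain_append]
      refine ⟨hc, ?_⟩
      rw [hend]
      exact ⟨rfl, trivial⟩
    · rw [endOf_cons, endOf_append, hend]
      simp [LGraph.endOf, he]

lemma pathLabel_barRev (p : List Γ.E) :
    Γ.pathLabel (Γ.barRev p) = (Γ.pathLabel p)⁻¹ := by
  induction p with
  | nil => simp
  | cons e p ih =>
    rw [barRev_cons, pathLabel_append, pathLabel_cons, ih]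
    simp [LGraph.pathLabel, labF_bar]

lemma reduced_barRev {p : List Γ.E} (h : Γ.Reduced p) : Γ.Reduced (Γ.barRev p) := by
  unfold LGraph.Reduced LGraph.barRev
  rw [List.Chain', List.isChain_reverse, List.isChain_map]
  refine List.IsChain.imp ?_ h
  intro a b hab hc
  rw [Γ.bar_bar] at hc
  exact hab hc.symm

lemma mem_barRev {p : List Γ.E} {d : Γ.E} (h : Γ.bar d ∈ p) : d ∈ Γ.barRev p := by
  unfold LGraph.barRev
  rw [List.mem_reverse, List.mem_map]
  exact ⟨Γ.bar d, h, Γ.bar_bar d⟩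

/-- the label of an edge as a one-letter `mk`. -/
lemma labF_eq_mk (e : Γ.E) : Γ.labF e = FreeGroup.mk [Γ.lab e] := by
  rcases h : Γ.lab e with ⟨x, b⟩
  cases b <;> simp [LGraph.labF, h, FreeGroup.of, FreeGroup.inv_mk, FreeGroup.invRev]

lemma pathLabel_eq_mk (p : List Γ.E) :
    Γ.pathLabel p = FreeGroup.mk (p.map Γ.lab) := by
  induction p with
  | nil => simp [FreeGroup.one_eq_mk]
  | cons e p ih =>
    rw [pathLabel_cons, ih, labF_eq_mk, FreeGroup.mul_mk]
    rfl

lemma chain_consec {v : Γ.V} {p : List Γ.E} (h : Γ.chain v p) :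
    p.Chain' (fun e f => Γ.init f = Γ.term e) := by
  induction p generalizing v with
  | nil => exact List.isChain_nil
  | cons e p ih =>
    obtain ⟨he, hp⟩ := h
    rw [List.Chain', List.isChain_cons]
    refine ⟨?_, ih hp⟩
    intro f hf
    cases p with
    | nil => simp at hf
    | cons g q => rw [List.head?_cons, Option.mem_some_iff] at hf; subst hf; exact hp.1

/-- In a folded graph, the labels along a reduced path form a reduced word. -/
lemma NR_of_reduced (hF : Γ.Folded) {v : Γ.V} {p : List Γ.E}
    (hc : Γ.chain v p) (hr : Γ.Reduced p) : NR (p.map Γ.lab) := by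
  unfold NR
  rw [List.Chain', List.isChain_map]
  have h2 : p.Chain' (fun e f => Γ.init f = Γ.term e ∧ f ≠ Γ.bar e) := by
    have h0 := chain_consec hc
    unfold LGraph.Reduced at hr
    clear hc
    induction p with
    | nil => exact List.isChain_nil
    | cons e p ih =>
      rw [List.Chain', List.isChain_cons] at h0 hr ⊢
      exact ⟨fun y hy => ⟨h0.1 y hy, hr.1 y hy⟩, ih hr.2 h0.2⟩
  refine List.IsChain.imp ?_ h2
  rintro e f ⟨hin, hne⟩ ⟨h1, h2⟩
  apply hne
  apply hF f (Γ.bar e)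
  · rw [hin]; rfl
  · rw [Γ.lab_bar]
    exact Prod.ext h1.symm (by rw [h2, Bool.not_not])

/-- In any graph, chains from a common vertex with the same label word coincide. -/
lemma chain_eq_of_labels (hF : Γ.Folded) :
    ∀ {p q : List Γ.E} {v : Γ.V}, Γ.chain v p → Γ.chain v q →
      p.map Γ.lab = q.map Γ.lab → p = q := by
  intro p
  induction p with
  | nil => intro q v _ _ h; cases q <;> simp_all
  | cons e p ih =>
    intro q v hp hq h
    cases q with
    | nil => simp at h
    | cons f q' =>
      simp only [List.map_cons, List.cons.injEq] at h
      have : e = f := hF e f (hp.1.trans hq.1.symm) h.1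
      subst this
      rw [ih hp.2 hq.2 h.2]

/-- In a folded graph, reduced chains from a common vertex with equal path labels
are equal. -/
lemma chain_eq_of_pathLabel (hF : Γ.Folded) {p q : List Γ.E} {v : Γ.V}
    (hp : Γ.chain v p) (hq : Γ.chain v q) (hrp : Γ.Reduced p) (hrq : Γ.Reduced q)
    (hl : Γ.pathLabel p = Γ.pathLabel q) : p = q := by
  rw [pathLabel_eq_mk, pathLabel_eq_mk] at hl
  exact chain_eq_of_labels hF hp hq
    (mk_inj_of_NR (NR_of_reduced hF hp hrp) (NR_of_reduced hF hq hrq) hl)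

/-- Reduction of paths: preserves start, end, and label. -/
lemma reducePath {v : Γ.V} :
    ∀ {p : List Γ.E}, Γ.chain v p → ∃ q, Γ.chain v q ∧ Γ.endOf v q = Γ.endOf v p ∧
      Γ.Reduced q ∧ Γ.pathLabel q = Γ.pathLabel p ∧ q.length ≤ p.length := by
  suffices h : ∀ n (p : List Γ.E), p.length = n → Γ.chain v p → ∃ q, Γ.chain v q ∧
      Γ.endOf v q = Γ.endOf v p ∧ Γ.Reduced q ∧ Γ.pathLabel q = Γ.pathLabel p ∧
      q.length ≤ p.length by
    intro p hc; exact h p.length p rfl hc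
  intro n
  induction n using Nat.strong_induction_on with
  | _ n ih =>
    intro p hn hc
    by_cases hr : Γ.Reduced p
    · exact ⟨p, hc, rfl, hr, rfl, le_rfl⟩
    · obtain ⟨p₁, a, b, p₂, hdec, hR⟩ := not_chain'_decomp hr
      push_neg at hR
      subst hdec
      subst hn
      have hb : b = Γ.bar a := hR
      subst hb
      have hlen : (p₁ ++ p₂).length < (p₁ ++ a :: Γ.bar a :: p₂).length := by
        simp
      have hc1 : Γ.chain v (p₁ ++ p₂) := by
        rw [chain_append] at hc ⊢
        obtain ⟨h1, h2, h3, h4⟩ := hc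
        rw [term_bar, h2] at h4
        exact ⟨h1, h4⟩
      have hend : Γ.endOf v (p₁ ++ p₂) = Γ.endOf v (p₁ ++ a :: Γ.bar a :: p₂) := by
        rw [endOf_append, endOf_append v p₁, endOf_cons, endOf_cons, term_bar]
        rw [chain_append] at hc
        rw [hc.2.1]
      have hlab : Γ.pathLabel (p₁ ++ p₂) = Γ.pathLabel (p₁ ++ a :: Γ.bar a :: p₂) := by
        rw [pathLabel_append, pathLabel_append, pathLabel_cons, pathLabel_cons,
          labF_bar, mul_inv_cancel_left]
      obtain ⟨q, hq1, hq2, hq3, hq4, hq5⟩ := ih _ hlen _ rfl hc1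
      exact ⟨q, hq1, hq2.trans hend, hq3, hq4.trans hlab,
        hq5.trans (le_of_lt hlen)⟩

end LGraph
/-! ### Canonical fold and trim constructions -/

namespace LGraph

open scoped Classical

variable {X : Type}

lemma ne_bar_of_lab_eq {Γ : LGraph X} (e₁ e₂ : Γ.E) (hlab : Γ.lab e₁ = Γ.lab e₂) :
    e₁ ≠ Γ.bar e₂ := by
  intro h
  have h2 := Γ.lab_bar e₂
  rw [← h, hlab] at h2
  have := congrArg Prod.snd h2
  simp at this

/-- vertices of the canonical fold. -/
abbrev foldV {Γ : LGraph X} (e₁ e₂ : Γ.E) : Type :=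
  {v : Γ.V // v = Γ.term e₁ ∨ v ≠ Γ.term e₂}

/-- edges of the canonical fold. -/
abbrev foldE {Γ : LGraph X} (e₁ e₂ : Γ.E) : Type :=
  {d : Γ.E // d ≠ e₂ ∧ d ≠ Γ.bar e₂}

/-- vertex projection. -/
noncomputable def foldσ {Γ : LGraph X} (e₁ e₂ : Γ.E) (v : Γ.V) : foldV e₁ e₂ :=
  if h : v = Γ.term e₂ then ⟨Γ.term e₁, Or.inl rfl⟩ else ⟨v, Or.inr h⟩

/-- edge projection. -/
noncomputable def foldρ {Γ : LGraph X} (e₁ e₂ : Γ.E) (hne : e₁ ≠ e₂)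
    (hlab : Γ.lab e₁ = Γ.lab e₂) (d : Γ.E) : foldE e₁ e₂ :=
  if h : d = e₂ then ⟨e₁, hne, ne_bar_of_lab_eq e₁ e₂ hlab⟩
  else if h' : d = Γ.bar e₂ then
    ⟨Γ.bar e₁, fun hc => ne_bar_of_lab_eq e₁ e₂ hlab (by rw [← hc, Γ.bar_bar]),
      fun hc => hne (bar_inj.mp hc)⟩
  else ⟨d, h, h'⟩

variable {Γ : LGraph X}

lemma foldσ_val (e₁ e₂ : Γ.E) (v : Γ.V) :
    (foldσ e₁ e₂ v).val = if v = Γ.term e₂ then Γ.term e₁ else v := by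
  unfold foldσ
  split_ifs with h <;> simp [h]

lemma foldρ_val (e₁ e₂ : Γ.E) (hne : e₁ ≠ e₂) (hlab : Γ.lab e₁ = Γ.lab e₂) (d : Γ.E) :
    (foldρ e₁ e₂ hne hlab d).val =
      if d = e₂ then e₁ else if d = Γ.bar e₂ then Γ.bar e₁ else d := by
  unfold foldρ
  split_ifs with h h' <;> rfl

lemma foldσ_glue (e₁ e₂ : Γ.E) : foldσ e₁ e₂ (Γ.term e₁) = foldσ e₁ e₂ (Γ.term e₂) := by
  apply Subtype.ext
  rw [foldσ_val, foldσ_val, if_pos rfl]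
  split_ifs with h
  · rw [h]
  · rfl

lemma foldσ_val_of_ne {e₁ e₂ : Γ.E} {v : Γ.V} (h : v ≠ Γ.term e₂) :
    (foldσ e₁ e₂ v).val = v := by
  rw [foldσ_val, if_neg h]

/-- the canonical folded graph. -/
noncomputable def foldG (e₁ e₂ : Γ.E) : LGraph X where
  V := foldV e₁ e₂
  E := foldE e₁ e₂
  init d := foldσ e₁ e₂ (Γ.init d.val)
  bar d := ⟨Γ.bar d.val, fun hc => d.2.2 (by rw [← Γ.bar_bar d.val, hc]),
    fun hc => d.2.1 (bar_inj.mp hc)⟩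
  bar_ne d := by
    intro hc
    exact Γ.bar_ne d.val (congrArg Subtype.val hc)
  bar_bar d := by
    apply Subtype.ext
    exact Γ.bar_bar d.val
  lab d := Γ.lab d.val
  lab_bar d := Γ.lab_bar d.val

lemma foldG_init (e₁ e₂ : Γ.E) (d : (foldG e₁ e₂).E) :
    (foldG e₁ e₂).init d = foldσ e₁ e₂ (Γ.init d.val) := rfl

lemma foldG_term (e₁ e₂ : Γ.E) (d : (foldG e₁ e₂).E) :
    (foldG e₁ e₂).term d = foldσ e₁ e₂ (Γ.term d.val) := rfl

lemma foldG_bar_val (e₁ e₂ : Γ.E) (d : (foldG e₁ e₂).E) :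
    ((foldG e₁ e₂).bar d).val = Γ.bar d.val := rfl

lemma foldG_lab (e₁ e₂ : Γ.E) (d : (foldG e₁ e₂).E) :
    (foldG e₁ e₂).lab d = Γ.lab d.val := rfl

/-- the canonical fold step. -/
noncomputable def foldStep (e₁ e₂ : Γ.E) (hne : e₁ ≠ e₂) (hinit : Γ.init e₁ = Γ.init e₂)
    (hlab : Γ.lab e₁ = Γ.lab e₂) : FoldStep Γ (foldG e₁ e₂) where
  f :=
    { mapV := foldσ e₁ e₂
      mapE := foldρ e₁ e₂ hne hlab
      map_init := by
        intro d
        show foldσ e₁ e₂ (Γ.init (foldρ e₁ e₂ hne hlab d).val) = foldσ e₁ e₂ (Γ.init d)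
        have hval := foldρ_val e₁ e₂ hne hlab d
        by_cases h : d = e₂
        · subst d
          rw [if_pos rfl] at hval
          rw [hval, hinit]
        · by_cases h' : d = Γ.bar e₂
          · subst d
            rw [if_neg h, if_pos rfl] at hval
            rw [hval]
            exact foldσ_glue e₁ e₂
          · rw [if_neg h, if_neg h'] at hval
            rw [hval]
      map_bar := by
        intro d
        apply Subtype.ext
        show Γ.bar (foldρ e₁ e₂ hne hlab d).val = (foldρ e₁ e₂ hne hlab (Γ.bar d)).val
        by_cases h : d = e₂
        · subst d
          have h1 := foldρ_val e₁ e₂ hne hlab e₂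
          have h2 := foldρ_val e₁ e₂ hne hlab (Γ.bar e₂)
          rw [if_pos rfl] at h1
          rw [if_neg (Γ.bar_ne e₂), if_pos rfl] at h2
          rw [h1, h2]
        · by_cases h' : d = Γ.bar e₂
          · subst d
            have h1 := foldρ_val e₁ e₂ hne hlab (Γ.bar e₂)
            have h2 := foldρ_val e₁ e₂ hne hlab e₂
            rw [if_neg h, if_pos rfl] at h1
            rw [if_pos rfl] at h2
            rw [Γ.bar_bar e₂, h1, h2, Γ.bar_bar e₁]
          · have h1 := foldρ_val e₁ e₂ hne hlab d
            have h2 := foldρ_val e₁ e₂ hne hlab (Γ.bar d)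
            rw [if_neg h, if_neg h'] at h1
            rw [if_neg (fun hc => h' (by rw [← Γ.bar_bar d, hc])),
              if_neg (fun hc => h (bar_inj.mp hc))] at h2
            rw [h1, h2]
      map_lab := by
        intro d
        show Γ.lab (foldρ e₁ e₂ hne hlab d).val = Γ.lab d
        have hval := foldρ_val e₁ e₂ hne hlab d
        by_cases h : d = e₂
        · subst d
          rw [if_pos rfl] at hval
          rw [hval, hlab]
        · by_cases h' : d = Γ.bar e₂
          · subst d
            rw [if_neg h, if_pos rfl] at hval
            rw [hval, Γ.lab_bar, Γ.lab_bar, hlab]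
          · rw [if_neg h, if_neg h'] at hval
            rw [hval] }
  e₁ := e₁
  e₂ := e₂
  ne := hne
  init_eq := hinit
  lab_eq := hlab
  surjV := by
    rintro ⟨v, hv⟩
    by_cases h : v = Γ.term e₂
    · rcases hv with hv | hv
      · refine ⟨Γ.term e₂, Subtype.ext ?_⟩
        rw [foldσ_val, if_pos rfl]
        exact hv.symm
      · exact absurd h hv
    · exact ⟨v, Subtype.ext (by rw [foldσ_val, if_neg h])⟩
  surjE := by
    rintro ⟨d, hd1, hd2⟩
    refine ⟨d, Subtype.ext ?_⟩
    rw [foldρ_val, if_neg hd1, if_neg hd2]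
  glueE := by
    apply Subtype.ext
    rw [foldρ_val, foldρ_val, if_neg hne, if_neg (ne_bar_of_lab_eq e₁ e₂ hlab),
      if_pos rfl]
  injE := by
    intro d d' h
    have h' := congrArg Subtype.val h
    rw [foldρ_val, foldρ_val] at h'
    have hb1 : Γ.bar e₁ ≠ e₂ := fun hc => ne_bar_of_lab_eq e₁ e₂ hlab
      (by rw [← hc, Γ.bar_bar])
    have hbne : Γ.bar e₂ ≠ e₂ := Γ.bar_ne e₂
    by_cases a1 : d = e₂ <;> by_cases a2 : d' = e₂
    · exact Or.inl (a1.trans a2.symm)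
    · rw [if_pos a1, if_neg a2] at h'
      by_cases a3 : d' = Γ.bar e₂
      · rw [if_pos a3] at h'
        exact absurd h' (Γ.bar_ne e₁).symm
      · rw [if_neg a3] at h'
        subst a1
        refine Or.inr (Or.inl ?_)
        rw [← h']
        exact Set.pair_comm _ _
    · rw [if_neg a1, if_pos a2] at h'
      by_cases a3 : d = Γ.bar e₂
      · rw [if_pos a3] at h'
        exact absurd h' (Γ.bar_ne e₁)
      · rw [if_neg a3] at h'
        subst a2
        refine Or.inr (Or.inl ?_)
        rw [h']
    · rw [if_neg a1, if_neg a2] at h'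
      by_cases a3 : d = Γ.bar e₂ <;> by_cases a4 : d' = Γ.bar e₂
      · exact Or.inl (a3.trans a4.symm)
      · rw [if_pos a3, if_neg a4] at h'
        subst a3
        refine Or.inr (Or.inr ?_)
        rw [← h']
        exact Set.pair_comm _ _
      · rw [if_neg a3, if_pos a4] at h'
        subst a4
        refine Or.inr (Or.inr ?_)
        rw [h']
      · rw [if_neg a3, if_neg a4] at h'
        exact Or.inl h'
  injV := by
    intro v w h
    have h' := congrArg Subtype.val h
    rw [foldσ_val, foldσ_val] at h'
    by_cases a1 : v = Γ.term e₂ <;> by_cases a2 : w = Γ.term e₂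
    · exact Or.inl (a1.trans a2.symm)
    · rw [if_pos a1, if_neg a2] at h'
      subst a1
      refine Or.inr ?_
      rw [← h']
      exact Set.pair_comm _ _
    · rw [if_neg a1, if_pos a2] at h'
      subst a2
      refine Or.inr ?_
      rw [h']
    · rw [if_neg a1, if_neg a2] at h'
      exact Or.inl h'

/-- the canonical trimmed graph. -/
def trimG (v : Γ.V) (e : Γ.E) (hdeg : ∀ d, Γ.init d = v → d = e) : LGraph X where
  V := {w : Γ.V // w ≠ v}
  E := {d : Γ.E // d ≠ e ∧ d ≠ Γ.bar e}
  init d := ⟨Γ.init d.val, fun hc => d.2.1 (hdeg d.val hc)⟩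
  bar d := ⟨Γ.bar d.val, fun hc => d.2.2 (by rw [← Γ.bar_bar d.val, hc]),
    fun hc => d.2.1 (bar_inj.mp hc)⟩
  bar_ne d := fun hc => Γ.bar_ne d.val (congrArg Subtype.val hc)
  bar_bar d := Subtype.ext (Γ.bar_bar d.val)
  lab d := Γ.lab d.val
  lab_bar d := Γ.lab_bar d.val

/-- the canonical trim step. -/
def trimStep (v : Γ.V) (e : Γ.E) (hin : Γ.init e = v) (hdeg : ∀ d, Γ.init d = v → d = e) :
    TrimStep Γ (trimG v e hdeg) where
  j :=
    { mapV := Subtype.val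
      mapE := Subtype.val
      map_init := fun _ => rfl
      map_bar := fun _ => rfl
      map_lab := fun _ => rfl }
  v := v
  e := e
  init_e := hin
  deg_one := hdeg
  injV := Subtype.val_injective
  injE := Subtype.val_injective
  rangeV := Subtype.range_val
  rangeE := Subtype.range_val

end LGraph
/-! ### Morphism pushforward, step preservation lemmas -/

namespace LGraph
variable {X : Type}

lemma labF_congr {Γ Δ : LGraph X} {d : Γ.E} {d' : Δ.E} (h : Δ.lab d' = Γ.lab d) :
    Δ.labF d' = Γ.labF d := by
  unfold LGraph.labF
  rw [h]

end LGraph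

namespace LHom

variable {X : Type} {Γ Δ : LGraph X}

lemma map_term (h : LHom Γ Δ) (e : Γ.E) : Δ.term (h.mapE e) = h.mapV (Γ.term e) := by
  unfold LGraph.term
  rw [h.map_bar, h.map_init]

lemma chain_map (h : LHom Γ Δ) {v : Γ.V} {p : List Γ.E} (hc : Γ.chain v p) :
    Δ.chain (h.mapV v) (p.map h.mapE) := by
  induction p generalizing v with
  | nil => trivial
  | cons e p ih =>
    exact ⟨by rw [h.map_init, hc.1], by rw [h.map_term]; exact ih hc.2⟩

lemma endOf_map (h : LHom Γ Δ) (v : Γ.V) (p : List Γ.E) :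
    Δ.endOf (h.mapV v) (p.map h.mapE) = h.mapV (Γ.endOf v p) := by
  induction p generalizing v with
  | nil => rfl
  | cons e p ih =>
    rw [List.map_cons, LGraph.endOf_cons, LGraph.endOf_cons, h.map_term, ih]

lemma pathLabel_map (h : LHom Γ Δ) (p : List Γ.E) :
    Δ.pathLabel (p.map h.mapE) = Γ.pathLabel p := by
  induction p with
  | nil => rfl
  | cons e p ih =>
    rw [List.map_cons, LGraph.pathLabel_cons, LGraph.pathLabel_cons, ih,
      LGraph.labF_congr (h.map_lab e)]

lemma pi1_sub (h : LHom Γ Δ) (v : Γ.V) : Γ.pi1 v ⊆ Δ.pi1 (h.mapV v) := by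
  rintro g ⟨p, hc, he, hl⟩
  exact ⟨p.map h.mapE, h.chain_map hc, by rw [h.endOf_map, he], by rw [h.pathLabel_map, hl]⟩

end LHom

namespace FoldStep

variable {X : Type} {Γ Δ : LGraph X}

lemma finE (F : FoldStep Γ Δ) [Finite Γ.E] : Finite Δ.E :=
  Finite.of_surjective _ F.surjE

lemma finV (F : FoldStep Γ Δ) [Finite Γ.V] : Finite Δ.V :=
  Finite.of_surjective _ F.surjV

lemma card_lt (F : FoldStep Γ Δ) [Finite Γ.E] : Nat.card Δ.E < Nat.card Γ.E := by
  have : Finite Δ.E := F.finE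
  have := Fintype.ofFinite Γ.E
  have := Fintype.ofFinite Δ.E
  rw [Nat.card_eq_fintype_card, Nat.card_eq_fintype_card]
  exact Fintype.card_lt_of_surjective_not_injective F.f.mapE F.surjE
    (fun hinj => F.ne (hinj F.glueE))

lemma connected (F : FoldStep Γ Δ) (hc : Γ.Connected) : Δ.Connected := by
  intro v w
  obtain ⟨v₀, rfl⟩ := F.surjV v
  obtain ⟨w₀, rfl⟩ := F.surjV w
  obtain ⟨p, hp, he⟩ := hc v₀ w₀
  exact ⟨p.map F.f.mapE, F.f.chain_map hp, by rw [F.f.endOf_map, he]⟩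

/-- a label-1 connecting path between two vertices identified by the fold. -/
lemma hop (F : FoldStep Γ Δ) {u u' : Γ.V} (h : F.f.mapV u = F.f.mapV u') :
    ∃ hp, Γ.chain u hp ∧ Γ.endOf u hp = u' ∧ Γ.pathLabel hp = 1 := by
  rcases F.injV u u' h with rfl | hset
  · exact ⟨[], trivial, rfl, rfl⟩
  · have hu : u = Γ.term F.e₁ ∨ u = Γ.term F.e₂ := by
      have : u ∈ ({u, u'} : Set Γ.V) := Set.mem_insert _ _
      rw [hset] at this
      simpa using this
    have hu' : u' = Γ.term F.e₁ ∨ u' = Γ.term F.e₂ := by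
      have : u' ∈ ({u, u'} : Set Γ.V) := Set.mem_insert_of_mem _ rfl
      rw [hset] at this
      simpa using this
    have hlabF : Γ.labF F.e₁ = Γ.labF F.e₂ := by
      unfold LGraph.labF
      rw [F.lab_eq]
    rcases hu with rfl | rfl <;> rcases hu' with h' | h'
    · exact ⟨[], trivial, h'.symm, rfl⟩
    · refine ⟨[Γ.bar F.e₁, F.e₂],
        ⟨rfl, by rw [LGraph.term_bar]; exact F.init_eq.symm, trivial⟩, ?_, ?_⟩
      · rw [LGraph.endOf_cons, LGraph.endOf_cons, LGraph.endOf_nil]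
        exact h'.symm
      · rw [LGraph.pathLabel_cons, LGraph.pathLabel_cons, LGraph.pathLabel_nil,
          LGraph.labF_bar, hlabF]
        group
    · refine ⟨[Γ.bar F.e₂, F.e₁],
        ⟨rfl, by rw [LGraph.term_bar]; exact F.init_eq, trivial⟩, ?_, ?_⟩
      · rw [LGraph.endOf_cons, LGraph.endOf_cons, LGraph.endOf_nil]
        exact h'.symm
      · rw [LGraph.pathLabel_cons, LGraph.pathLabel_cons, LGraph.pathLabel_nil,
          LGraph.labF_bar, hlabF]
        group
    · exact ⟨[], trivial, h'.symm, rfl⟩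

lemma descend (F : FoldStep Γ Δ) {q : List Δ.E} :
    ∀ {w : Δ.V} {u : Γ.V}, Δ.chain w q → F.f.mapV u = w →
      ∃ p, Γ.chain u p ∧ F.f.mapV (Γ.endOf u p) = Δ.endOf w q ∧
        Γ.pathLabel p = Δ.pathLabel q := by
  induction q with
  | nil => exact fun hc hw => ⟨[], trivial, by simpa, rfl⟩
  | cons d' q ih =>
    intro w u hc hw
    obtain ⟨d, rfl⟩ := F.surjE d'
    obtain ⟨h1, h2⟩ := hc
    rw [F.f.map_init] at h1
    have hinit : F.f.mapV u = F.f.mapV (Γ.init d) := by rw [h1, hw]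
    obtain ⟨hp, hp1, hp2, hp3⟩ := F.hop hinit
    obtain ⟨p, hq1, hq2, hq3⟩ := ih h2 (F.f.map_term d).symm
    refine ⟨hp ++ d :: p, ?_, ?_, ?_⟩
    · rw [LGraph.chain_append, hp2]
      exact ⟨hp1, rfl, hq1⟩
    · rw [LGraph.endOf_append, hp2, LGraph.endOf_cons, hq2, LGraph.endOf_cons]
    · rw [LGraph.pathLabel_append, hp3, one_mul, LGraph.pathLabel_cons,
        LGraph.pathLabel_cons, hq3, LGraph.labF_congr (F.f.map_lab d)]

lemma pi1_eq (F : FoldStep Γ Δ) (v : Γ.V) : Δ.pi1 (F.f.mapV v) = Γ.pi1 v := by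
  apply Set.Subset.antisymm
  · rintro g ⟨q, hc, he, hl⟩
    obtain ⟨p, hp1, hp2, hp3⟩ := F.descend hc rfl
    rw [he] at hp2
    obtain ⟨hp, hh1, hh2, hh3⟩ := F.hop hp2
    refine ⟨p ++ hp, ?_, ?_, ?_⟩
    · rw [LGraph.chain_append]
      exact ⟨hp1, hh1⟩
    · rw [LGraph.endOf_append, hh2]
    · rw [LGraph.pathLabel_append, hh3, mul_one, hp3, hl]
  · exact F.f.pi1_sub v

end FoldStep

namespace TrimStep

variable {X : Type} {Γ Δ : LGraph X}

lemma finE (T : TrimStep Γ Δ) [Finite Γ.E] : Finite Δ.E :=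
  Finite.of_injective _ T.injE

lemma finV (T : TrimStep Γ Δ) [Finite Γ.V] : Finite Δ.V :=
  Finite.of_injective _ T.injV

lemma e_not_mem_range (T : TrimStep Γ Δ) : T.e ∉ Set.range T.j.mapE := by
  rw [T.rangeE]
  simp

lemma card_lt (T : TrimStep Γ Δ) [Finite Γ.E] : Nat.card Δ.E < Nat.card Γ.E := by
  have : Finite Δ.E := T.finE
  have := Fintype.ofFinite Γ.E
  have := Fintype.ofFinite Δ.E
  rw [Nat.card_eq_fintype_card, Nat.card_eq_fintype_card]
  exact Fintype.card_lt_of_injective_of_notMem _ T.injE T.e_not_mem_range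

lemma mapV_ne (T : TrimStep Γ Δ) (u : Δ.V) : T.j.mapV u ≠ T.v := by
  have : T.j.mapV u ∈ Set.range T.j.mapV := Set.mem_range_self u
  rw [T.rangeV] at this
  exact this

/-- a chain between non-deleted vertices can avoid the deleted edge pair. -/
lemma avoid (T : TrimStep Γ Δ) {w w' : Γ.V} (hw : w ≠ T.v) (hw' : w' ≠ T.v) :
    ∀ {p : List Γ.E}, Γ.chain w p → Γ.endOf w p = w' →
      ∃ p', Γ.chain w p' ∧ Γ.endOf w p' = w' ∧
        (∀ d ∈ p', d ≠ T.e ∧ d ≠ Γ.bar T.e) ∧ Γ.pathLabel p' = Γ.pathLabel p := by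
  intro p
  suffices H : ∀ n (p : List Γ.E), p.length = n → Γ.chain w p → Γ.endOf w p = w' →
      ∃ p', Γ.chain w p' ∧ Γ.endOf w p' = w' ∧
        (∀ d ∈ p', d ≠ T.e ∧ d ≠ Γ.bar T.e) ∧ Γ.pathLabel p' = Γ.pathLabel p by
    intro hc he
    exact H p.length p rfl hc he
  intro n
  induction n using Nat.strong_induction_on with
  | _ n ih =>
    intro p hn hc he
    by_cases hmem : Γ.bar T.e ∈ p
    · obtain ⟨p₁, p₂, rfl⟩ := List.append_of_mem hmem
      rw [LGraph.chain_append] at hc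
      obtain ⟨hc1, hc2, hc3⟩ := hc
      have h2 : Γ.endOf w p₁ = Γ.term T.e := hc2.symm
      have h3 : Γ.chain T.v p₂ := by
        rw [LGraph.term_bar, T.init_e] at hc3
        exact hc3
      cases p₂ with
      | nil =>
        exfalso
        apply hw'
        rw [← he, LGraph.endOf_append, LGraph.endOf_cons, LGraph.endOf_nil,
          LGraph.term_bar, T.init_e]
      | cons d₂ p₃ =>
        obtain ⟨hd₂, hc4⟩ := h3
        have hde : d₂ = T.e := T.deg_one d₂ hd₂
        subst hde
        have hlen : (p₁ ++ p₃).length < n := by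
          rw [← hn]
          simp
        have hch : Γ.chain w (p₁ ++ p₃) := by
          rw [LGraph.chain_append, h2]
          exact ⟨hc1, hc4⟩
        have hend : Γ.endOf w (p₁ ++ p₃) = w' := by
          rw [← he, LGraph.endOf_append, LGraph.endOf_append, h2,
            LGraph.endOf_cons, LGraph.endOf_cons]
        obtain ⟨p', k1, k2, k3, k4⟩ := ih _ hlen _ rfl hch hend
        refine ⟨p', k1, k2, k3, ?_⟩
        rw [k4, LGraph.pathLabel_append, LGraph.pathLabel_append,
          LGraph.pathLabel_cons, LGraph.pathLabel_cons, LGraph.labF_bar]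
        group
    · by_cases hmem2 : T.e ∈ p
      · exfalso
        obtain ⟨p₁, p₂, rfl⟩ := List.append_of_mem hmem2
        rw [LGraph.chain_append] at hc
        obtain ⟨hc1, hc2, _⟩ := hc
        have hv : Γ.endOf w p₁ = T.v := by rw [← hc2, T.init_e]
        cases p₁ with
        | nil => exact hw hv
        | cons d₁ q₁ =>
          have hconc : ∃ q₀ d₀, d₁ :: q₁ = q₀ ++ [d₀] := by
            obtain ⟨q₀, d₀, h⟩ := (List.eq_nil_or_concat (d₁ :: q₁)).resolve_left (by simp)
            rw [List.concat_eq_append] at h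
            exact ⟨q₀, d₀, h⟩
          obtain ⟨q₀, d₀, hq⟩ := hconc
          rw [hq, LGraph.endOf_append, LGraph.endOf_cons, LGraph.endOf_nil] at hv
          have hb : Γ.bar d₀ = T.e := T.deg_one _ hv
          apply hmem
          have : Γ.bar T.e = d₀ := by rw [← hb, Γ.bar_bar]
          rw [this, hq]
          exact List.mem_append_left _
            (List.mem_append_right _ (List.mem_singleton_self d₀))
      · refine ⟨p, hc, he, fun d hd => ⟨?_, ?_⟩, rfl⟩
        · intro hd'; exact hmem2 (hd' ▸ hd)
        · intro hd'; exact hmem (hd' ▸ hd)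

/-- lift a chain avoiding the deleted pair. -/
lemma lift (T : TrimStep Γ Δ) : ∀ {p : List Γ.E} {w : Γ.V} {u : Δ.V}, Γ.chain w p →
    (∀ d ∈ p, d ≠ T.e ∧ d ≠ Γ.bar T.e) → T.j.mapV u = w →
      ∃ q, Δ.chain u q ∧ q.map T.j.mapE = p := by
  intro p
  induction p with
  | nil => exact fun _ _ _ => ⟨[], trivial, rfl⟩
  | cons d p ih =>
    intro w u hc hav hu
    have hd : d ∈ Set.range T.j.mapE := by
      rw [T.rangeE]
      exact hav d (List.mem_cons_self)
    obtain ⟨d₀, rfl⟩ := hd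
    have hinit : Δ.init d₀ = u := by
      apply T.injV
      rw [← T.j.map_init, hc.1, ← hu]
    obtain ⟨q, hq1, hq2⟩ := ih hc.2 (fun x hx => hav x (List.mem_cons_of_mem _ hx))
      (T.j.map_term d₀).symm
    exact ⟨d₀ :: q, ⟨hinit, hq1⟩, by rw [List.map_cons, hq2]⟩

lemma connected (T : TrimStep Γ Δ) (hc : Γ.Connected) : Δ.Connected := by
  intro u u'
  obtain ⟨p, hp, he⟩ := hc (T.j.mapV u) (T.j.mapV u')
  obtain ⟨p', h1, h2, h3, _⟩ := T.avoid (T.mapV_ne u) (T.mapV_ne u') hp he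
  obtain ⟨q, hq1, hq2⟩ := T.lift h1 h3 rfl
  refine ⟨q, hq1, ?_⟩
  apply T.injV
  rw [← T.j.endOf_map, hq2, h2]

lemma pi1_eq (T : TrimStep Γ Δ) (b : Δ.V) : Δ.pi1 b = Γ.pi1 (T.j.mapV b) := by
  apply Set.Subset.antisymm
  · exact T.j.pi1_sub b
  · rintro g ⟨p, hc, he, hl⟩
    obtain ⟨p', h1, h2, h3, h4⟩ := T.avoid (T.mapV_ne b) (T.mapV_ne b) hc he
    obtain ⟨q, hq1, hq2⟩ := T.lift h1 h3 rfl
    refine ⟨q, hq1, ?_, ?_⟩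
    · apply T.injV
      rw [← T.j.endOf_map, hq2, h2]
    · rw [← hl, ← h4, ← hq2, T.j.pathLabel_map]

end TrimStep
/-! ### Terminal graphs are folded core graphs -/

namespace PLGraph

variable {X : Type}

/-- a canonical pointed fold target exists. -/
lemma exists_pfold (Γ : PLGraph X) (e₁ e₂ : Γ.E) (hne : e₁ ≠ e₂)
    (hinit : Γ.toLGraph.init e₁ = Γ.toLGraph.init e₂)
    (hlab : Γ.toLGraph.lab e₁ = Γ.toLGraph.lab e₂) : ∃ Δ, PFold Γ Δ :=
  ⟨{ toLGraph := LGraph.foldG e₁ e₂, base := LGraph.foldσ e₁ e₂ Γ.base },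
    LGraph.foldStep e₁ e₂ hne hinit hlab, rfl⟩

/-- a canonical pointed trim target exists. -/
lemma exists_ptrim (Γ : PLGraph X) (v : Γ.V) (e : Γ.E) (hin : Γ.toLGraph.init e = v)
    (hdeg : ∀ d, Γ.toLGraph.init d = v → d = e) (hv : v ≠ Γ.base) : ∃ Δ, PTrim Γ Δ :=
  ⟨{ toLGraph := LGraph.trimG v e hdeg, base := ⟨Γ.base, Ne.symm hv⟩ },
    LGraph.trimStep v e hin hdeg, hv, rfl⟩

lemma folded_of_terminal (Γ : PLGraph X) (hterm : ∀ Ξ, ¬ PStep Γ Ξ) :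
    Γ.toLGraph.Folded := by
  intro e f hinit hlab
  by_contra hne
  obtain ⟨Δ, hΔ⟩ := Γ.exists_pfold e f hne hinit hlab
  exact hterm Δ (Or.inl hΔ)

lemma no_hair_of_terminal (Γ : PLGraph X) (hterm : ∀ Ξ, ¬ PStep Γ Ξ) :
    ∀ (v : Γ.V) (e : Γ.E), Γ.toLGraph.init e = v → v ≠ Γ.base →
      ∃ d, Γ.toLGraph.init d = v ∧ d ≠ e := by
  intro v e hin hv
  by_contra hno
  push_neg at hno
  have hdeg : ∀ d, Γ.toLGraph.init d = v → d = e := fun d hd => hno d hd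
  obtain ⟨Δ, hΔ⟩ := Γ.exists_ptrim v e hin hdeg hv
  exact hterm Δ (Or.inr hΔ)

end PLGraph

namespace LGraph

variable {X : Type}

/-- chains can be shortened below the number of vertices. -/
lemma shorten (Γ : LGraph X) [Finite Γ.V] {u w : Γ.V} :
    ∀ p, Γ.chain u p → Γ.endOf u p = w →
      ∃ q, Γ.chain u q ∧ Γ.endOf u q = w ∧ q.length < Nat.card Γ.V := by
  intro p
  suffices H : ∀ n (p : List Γ.E), p.length = n → Γ.chain u p → Γ.endOf u p = w →
      ∃ q, Γ.chain u q ∧ Γ.endOf u q = w ∧ q.length < Nat.card Γ.V by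
    intro h1 h2
    exact H p.length p rfl h1 h2
  intro n
  induction n using Nat.strong_induction_on with
  | _ n ih =>
    intro p hn hcp hep
    by_cases hsh : p.length < Nat.card Γ.V
    · exact ⟨p, hcp, hep, hsh⟩
    · push_neg at hsh
      have hne : Nonempty Γ.V := ⟨u⟩
      have hft := Fintype.ofFinite Γ.V
      have key : ∀ i j : ℕ, i < j → j ≤ p.length →
          Γ.endOf u (p.take i) = Γ.endOf u (p.take j) →
          ∃ q, Γ.chain u q ∧ Γ.endOf u q = w ∧ q.length < p.length := by
        intro i j hij hjl heq
        have h0 : Γ.chain u (p.take j ++ p.drop j) := by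
          rw [List.take_append_drop]
          exact hcp
        rw [chain_append] at h0
        have hci : Γ.chain u (p.take i) := by
          have h1 : Γ.chain u (p.take i ++ (p.take j).drop i) := by
            have : p.take i = (p.take j).take i := by
              rw [List.take_take, min_eq_left (le_of_lt hij)]
            rw [this, List.take_append_drop]
            exact h0.1
          exact (chain_append.mp h1).1
        refine ⟨p.take i ++ p.drop j, ?_, ?_, ?_⟩
        · rw [chain_append]
          refine ⟨hci, ?_⟩
          rw [heq]
          exact h0.2
        · rw [endOf_append, heq, ← endOf_append, List.take_append_drop]
          exact hep
        · rw [List.length_append, List.length_take, List.length_drop]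
          omega
      have hcard : Fintype.card Γ.V < Fintype.card (Fin (p.length + 1)) := by
        rw [Fintype.card_fin]
        rw [Nat.card_eq_fintype_card] at hsh
        omega
      obtain ⟨x, y, hxy, heq⟩ :=
        Fintype.exists_ne_map_eq_of_card_lt
          (fun i : Fin (p.length + 1) => Γ.endOf u (p.take i.val)) hcard
      have hxyne : (x : ℕ) ≠ (y : ℕ) := fun h => hxy (Fin.ext h)
      rcases lt_or_gt_of_ne hxyne with hlt | hlt
      · obtain ⟨q, h1, h2, h3⟩ := key x.val y.val hlt (Nat.lt_succ_iff.mp y.isLt) heq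
        exact ih q.length (by omega) q rfl h1 h2
      · obtain ⟨q, h1, h2, h3⟩ := key y.val x.val hlt (Nat.lt_succ_iff.mp x.isLt) heq.symm
        exact ih q.length (by omega) q rfl h1 h2

end LGraph
/-! ### distance machinery and the core property -/

namespace PLGraph

variable {X : Type}

/-- set of lengths of chains from `u` to the base. -/
def distSet (Γ : PLGraph X) (u : Γ.V) : Set ℕ :=
  {n | ∃ p, Γ.toLGraph.chain u p ∧ Γ.toLGraph.endOf u p = Γ.base ∧ p.length = n}

/-- distance to the base. -/
noncomputable def dist (Γ : PLGraph X) (u : Γ.V) : ℕ := sInf (Γ.distSet u)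

lemma dist_le (Γ : PLGraph X) (u : Γ.V) {p : List Γ.E} (hp : Γ.toLGraph.chain u p)
    (he : Γ.toLGraph.endOf u p = Γ.base) : Γ.dist u ≤ p.length :=
  Nat.sInf_le ⟨p, hp, he, rfl⟩

lemma dist_spec (Γ : PLGraph X) (hc : Γ.toLGraph.Connected) (u : Γ.V) :
    ∃ p, Γ.toLGraph.chain u p ∧ Γ.toLGraph.endOf u p = Γ.base ∧
      Γ.toLGraph.Reduced p ∧ p.length = Γ.dist u := by
  obtain ⟨p₀, hp₀, hep₀⟩ := hc u Γ.base
  have hne : (Γ.distSet u).Nonempty := ⟨p₀.length, p₀, hp₀, hep₀, rfl⟩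
  obtain ⟨p, hp, hep, hlen⟩ := Nat.sInf_mem hne
  obtain ⟨q, hq, heq, hrq, _, hlq⟩ := LGraph.reducePath hp
  have h1 : Γ.dist u ≤ q.length := Γ.dist_le u hq (heq.trans hep)
  have h2 : q.length ≤ Γ.dist u := by
    unfold PLGraph.dist
    omega
  exact ⟨q, hq, heq.trans hep, hrq, le_antisymm h2 h1⟩

lemma dist_lt_card (Γ : PLGraph X) [Finite Γ.V] (hc : Γ.toLGraph.Connected) (u : Γ.V) :
    Γ.dist u < Nat.card Γ.V := by
  obtain ⟨p₀, hp₀, hep₀⟩ := hc u Γ.base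
  obtain ⟨q, hq, heq, hlen⟩ := Γ.toLGraph.shorten p₀ hp₀ hep₀
  exact lt_of_le_of_lt (Γ.dist_le u hq heq) hlen

/-- From any non-base vertex there is a reduced chain to the base avoiding a
prescribed first edge. -/
lemma exists_reduced_to_base (Γ : PLGraph X) [Finite Γ.V] (hc : Γ.toLGraph.Connected)
    (hndeg : ∀ (v : Γ.V) (e : Γ.E), Γ.toLGraph.init e = v → v ≠ Γ.base →
      ∃ d, Γ.toLGraph.init d = v ∧ d ≠ e) :
    ∀ (u : Γ.V) (f : Γ.E), Γ.toLGraph.init f = u → u ≠ Γ.base →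
      ∃ r, Γ.toLGraph.chain u r ∧ Γ.toLGraph.endOf u r = Γ.base ∧
        Γ.toLGraph.Reduced r ∧ ∀ h ∈ r.head?, h ≠ f := by
  suffices H : ∀ k (u : Γ.V) (f : Γ.E), Nat.card Γ.V - Γ.dist u ≤ k →
      Γ.toLGraph.init f = u → u ≠ Γ.base →
      ∃ r, Γ.toLGraph.chain u r ∧ Γ.toLGraph.endOf u r = Γ.base ∧
        Γ.toLGraph.Reduced r ∧ ∀ h ∈ r.head?, h ≠ f by
    intro u f hf hu
    exact H _ u f le_rfl hf hu
  intro k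
  induction k with
  | zero =>
    intro u f hk hf hu
    exfalso
    have := Γ.dist_lt_card hc u
    omega
  | succ k ihk =>
    intro u f hk hf hu
    obtain ⟨s, hs1, hs2, hs3, hs4⟩ := Γ.dist_spec hc u
    have hspos : s ≠ [] := by
      intro h
      subst h
      exact hu hs2
    cases s with
    | nil => exact absurd rfl hspos
    | cons h t =>
      by_cases hhf : h = f
      · subst hhf
        obtain ⟨g, hg1, hg2⟩ := hndeg u h hf hu
        by_cases hub : Γ.toLGraph.term g = Γ.base
        · refine ⟨[g], ⟨hg1, trivial⟩, ?_, List.isChain_singleton g, ?_⟩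
          · rw [LGraph.endOf_cons, LGraph.endOf_nil]
            exact hub
          · intro y hy
            rw [List.head?_cons, Option.mem_some_iff] at hy
            subst hy
            exact hg2
        · obtain ⟨s', h1', h2', h3', h4'⟩ := Γ.dist_spec hc (Γ.toLGraph.term g)
          have hspos' : s' ≠ [] := by
            intro hx
            subst hx
            exact hub h2'
          cases s' with
          | nil => exact absurd rfl hspos'
          | cons h' t' =>
            by_cases hbg : h' = Γ.toLGraph.bar g
            · -- recurse: the distance of `term g` is `dist u + 1`
              subst hbg
              obtain ⟨hh1, hh2⟩ := h1'
              have ht' : Γ.toLGraph.chain u t' := by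
                rw [LGraph.term_bar, hg1] at hh2
                exact hh2
              have het' : Γ.toLGraph.endOf u t' = Γ.base := by
                rw [LGraph.endOf_cons] at h2'
                rw [← h2', LGraph.term_bar, hg1]
              have hd1 : Γ.dist u ≤ t'.length := Γ.dist_le u ht' het'
              have hd2 : t'.length + 1 = Γ.dist (Γ.toLGraph.term g) := by
                rw [← h4']
                simp
              have hdcard := Γ.dist_lt_card hc (Γ.toLGraph.term g)
              obtain ⟨r', k1, k2, k3, k4⟩ := ihk (Γ.toLGraph.term g) (Γ.toLGraph.bar g)
                (by omega) rfl hub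
              refine ⟨g :: r', ⟨hg1, k1⟩, ?_, ?_, ?_⟩
              · rw [LGraph.endOf_cons]
                exact k2
              · rw [LGraph.Reduced, List.Chain', List.isChain_cons]
                exact ⟨k4, k3⟩
              · intro y hy
                rw [List.head?_cons, Option.mem_some_iff] at hy
                subst hy
                exact hg2
            · refine ⟨g :: h' :: t', ⟨hg1, h1'⟩, ?_, ?_, ?_⟩
              · rw [LGraph.endOf_cons]
                exact h2'
              · rw [LGraph.Reduced, List.Chain', List.isChain_cons]
                refine ⟨?_, h3'⟩
                intro y hy
                rw [List.head?_cons, Option.mem_some_iff] at hy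
                subst hy
                exact hbg
              · intro y hy
                rw [List.head?_cons, Option.mem_some_iff] at hy
                subst hy
                exact hg2
      · refine ⟨h :: t, hs1, hs2, hs3, ?_⟩
        intro y hy
        rw [List.head?_cons, Option.mem_some_iff] at hy
        subst hy
        exact hhf

/-- terminal graphs are pointed core graphs. -/
lemma isCore_of_terminal (Γ : PLGraph X) [Finite Γ.V] (hc : Γ.toLGraph.Connected)
    (hterm : ∀ Ξ, ¬ PStep Γ Ξ) : Γ.IsCore := by
  have hF := Γ.folded_of_terminal hterm
  have hndeg := Γ.no_hair_of_terminal hterm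
  refine ⟨hF, hc, ?_⟩
  intro e
  have step1 : ∃ q₀ l, Γ.toLGraph.chain Γ.base (q₀ ++ [l]) ∧
      Γ.toLGraph.Reduced (q₀ ++ [l]) ∧ (l = e ∨ l = Γ.toLGraph.bar e) := by
    obtain ⟨p₀, hp₀, hep₀⟩ := hc Γ.base (Γ.toLGraph.init e)
    obtain ⟨p, hp, hep, hrp, _, _⟩ := LGraph.reducePath hp₀
    rw [hep₀] at hep
    rcases List.eq_nil_or_concat p with rfl | ⟨p', l', rfl⟩
    · refine ⟨[], e, ?_, ?_, Or.inl rfl⟩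
      · rw [List.nil_append]
        exact ⟨hep.symm, trivial⟩
      · rw [List.nil_append]
        exact List.isChain_singleton e
    · rw [List.concat_eq_append] at hp hep hrp
      by_cases hl : l' = Γ.toLGraph.bar e
      · exact ⟨p', l', hp, hrp, Or.inr hl⟩
      · refine ⟨p' ++ [l'], e, ?_, ?_, Or.inl rfl⟩
        · rw [LGraph.chain_append]
          exact ⟨hp, hep.symm, trivial⟩
        · rw [LGraph.Reduced, List.Chain', List.isChain_append]
          refine ⟨hrp, List.isChain_singleton e, ?_⟩
          intro x hx y hy
          rw [List.getLast?_concat, Option.mem_some_iff] at hx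
          rw [List.head?_cons, Option.mem_some_iff] at hy
          subst hx
          subst hy
          intro hcon
          apply hl
          rw [hcon, Γ.toLGraph.bar_bar]
  obtain ⟨q₀, l, hq, hrq, hl⟩ := step1
  have hC : ∃ C, Γ.toLGraph.chain Γ.base C ∧ Γ.toLGraph.endOf Γ.base C = Γ.base ∧
      Γ.toLGraph.Reduced C ∧ l ∈ C := by
    by_cases hub : Γ.toLGraph.endOf Γ.base (q₀ ++ [l]) = Γ.base
    · exact ⟨q₀ ++ [l], hq, hub, hrq,
        List.mem_append_right _ (List.mem_singleton_self l)⟩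
    · have hinit : Γ.toLGraph.init (Γ.toLGraph.bar l) =
          Γ.toLGraph.endOf Γ.base (q₀ ++ [l]) := by
        rw [LGraph.endOf_append, LGraph.endOf_cons, LGraph.endOf_nil]
        rfl
      obtain ⟨r, hr1, hr2, hr3, hr4⟩ := Γ.exists_reduced_to_base hc hndeg _
        (Γ.toLGraph.bar l) hinit hub
      refine ⟨(q₀ ++ [l]) ++ r, ?_, ?_, ?_, ?_⟩
      · rw [LGraph.chain_append]
        exact ⟨hq, hr1⟩
      · rw [LGraph.endOf_append]
        exact hr2
      · rw [LGraph.Reduced, List.Chain', List.isChain_append]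
        refine ⟨hrq, hr3, ?_⟩
        intro x hx y hy
        rw [List.getLast?_concat, Option.mem_some_iff] at hx
        subst hx
        exact hr4 y hy
      · exact List.mem_append_left _ (List.mem_append_right _ (List.mem_singleton_self l))
  obtain ⟨C, hC1, hC2, hC3, hC4⟩ := hC
  rcases hl with rfl | hl
  · exact ⟨C, hC1, hC2, hC3, hC4⟩
  · obtain ⟨hb1, hb2⟩ := LGraph.chain_barRev hC1
    rw [hC2] at hb1 hb2
    refine ⟨Γ.toLGraph.barRev C, hb1, hb2, LGraph.reduced_barRev hC3, ?_⟩
    apply LGraph.mem_barRev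
    rw [← hl]
    exact hC4

end PLGraph
/-! ### Pointed step invariants, termination, existence of terminal forms -/

namespace PStep

variable {X : Type} {Γ Δ : PLGraph X}

lemma finE (h : PStep Γ Δ) (hE : Finite Γ.E) : Finite Δ.E := by
  rcases h with ⟨F, _⟩ | ⟨T, _, _⟩
  · exact F.finE
  · exact T.finE

lemma finV (h : PStep Γ Δ) (hV : Finite Γ.V) : Finite Δ.V := by
  rcases h with ⟨F, _⟩ | ⟨T, _, _⟩
  · exact F.finV
  · exact T.finV

lemma card_lt (h : PStep Γ Δ) (hE : Finite Γ.E) : Nat.card Δ.E < Nat.card Γ.E := by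
  rcases h with ⟨F, _⟩ | ⟨T, _, _⟩
  · exact F.card_lt
  · exact T.card_lt

lemma connected (h : PStep Γ Δ) (hc : Γ.toLGraph.Connected) : Δ.toLGraph.Connected := by
  rcases h with ⟨F, _⟩ | ⟨T, _, _⟩
  · exact F.connected hc
  · exact T.connected hc

lemma pi1S_eq (h : PStep Γ Δ) : Δ.pi1S = Γ.pi1S := by
  rcases h with ⟨F, hb⟩ | ⟨T, _, hb⟩
  · unfold PLGraph.pi1S
    rw [← hb]
    exact F.pi1_eq Γ.base
  · unfold PLGraph.pi1S
    rw [← hb]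
    exact T.pi1_eq Δ.base

end PStep

section Termination

variable {X : Type}

/-- termination of folding and trimming. -/
lemma no_infinite_chain (Γ : PLGraph X) (hE : Finite Γ.E) :
    ¬ ∃ g : ℕ → PLGraph X, g 0 = Γ ∧ ∀ n, PStep (g n) (g (n + 1)) := by
  rintro ⟨g, hg0, hgs⟩
  have hfin : ∀ n, Finite (g n).E := by
    intro n
    induction n with
    | zero => rw [hg0]; exact hE
    | succ n ih => exact (hgs n).finE ih
  have hdec : ∀ n, Nat.card (g (n + 1)).E < Nat.card (g n).E := by
    intro n
    exact (hgs n).card_lt (hfin n)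
  have hbound : ∀ n, Nat.card (g n).E + n ≤ Nat.card (g 0).E := by
    intro n
    induction n with
    | zero => omega
    | succ n ih =>
      have := hdec n
      omega
  have := hbound (Nat.card (g 0).E + 1)
  omega

/-- existence of a terminal graph reachable from `Γ`, with its invariants. -/
lemma exists_terminal (Γ : PLGraph X) (hE : Finite Γ.E) (hV : Finite Γ.V)
    (hc : Γ.toLGraph.Connected) :
    ∃ Δ : PLGraph X, Relation.ReflTransGen PStep Γ Δ ∧ (∀ Ξ, ¬ PStep Δ Ξ) ∧
      Finite Δ.E ∧ Finite Δ.V ∧ Δ.toLGraph.Connected ∧ Δ.pi1S = Γ.pi1S := by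
  classical
  suffices H : ∀ n (Γ : PLGraph X), Nat.card Γ.E ≤ n → Finite Γ.E → Finite Γ.V →
      Γ.toLGraph.Connected →
      ∃ Δ : PLGraph X, Relation.ReflTransGen PStep Γ Δ ∧ (∀ Ξ, ¬ PStep Δ Ξ) ∧
        Finite Δ.E ∧ Finite Δ.V ∧ Δ.toLGraph.Connected ∧ Δ.pi1S = Γ.pi1S by
    exact H _ Γ le_rfl hE hV hc
  intro n
  induction n using Nat.strong_induction_on with
  | _ n ih =>
    intro Γ hn hE hV hc
    by_cases hterm : ∃ Ξ, PStep Γ Ξ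
    · obtain ⟨Ξ, hΞ⟩ := hterm
      have hE' := hΞ.finE hE
      have hV' := hΞ.finV hV
      have hc' := hΞ.connected hc
      have hlt : Nat.card Ξ.E < n := lt_of_lt_of_le (hΞ.card_lt hE) hn
      obtain ⟨Δ, h1, h2, h3, h4, h5, h6⟩ := ih _ hlt Ξ le_rfl hE' hV' hc'
      exact ⟨Δ, Relation.ReflTransGen.head hΞ h1, h2, h3, h4, h5,
        h6.trans (hΞ.pi1S_eq)⟩
    · push_neg at hterm
      exact ⟨Γ, Relation.ReflTransGen.refl, fun Ξ hΞ => hterm Ξ hΞ, hE, hV, hc, rfl⟩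

/-- invariants propagate along reflexive-transitive closures of steps. -/
lemma reach_invariants {Γ Δ : PLGraph X} (h : Relation.ReflTransGen PStep Γ Δ)
    (hE : Finite Γ.E) (hV : Finite Γ.V) (hc : Γ.toLGraph.Connected) :
    Finite Δ.E ∧ Finite Δ.V ∧ Δ.toLGraph.Connected ∧ Δ.pi1S = Γ.pi1S := by
  induction h with
  | refl => exact ⟨hE, hV, hc, rfl⟩
  | tail hab hbc ih =>
    obtain ⟨h1, h2, h3, h4⟩ := ih
    exact ⟨hbc.finE h1, hbc.finV h2, hbc.connected h3, hbc.pi1S_eq.trans h4⟩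

end Termination
/-! ### Rigidity: pointed core graphs are determined by their π₁ -/

namespace PLGraph

variable {X : Type}

/-- correspondence between the vertices of two core graphs. -/
def corr (Δ Δ' : PLGraph X) (v : Δ.V) (w : Δ'.V) : Prop :=
  ∃ p q, Δ.toLGraph.chain Δ.base p ∧ Δ.toLGraph.Reduced p ∧
    Δ.toLGraph.endOf Δ.base p = v ∧
    Δ'.toLGraph.chain Δ'.base q ∧ Δ'.toLGraph.Reduced q ∧
    Δ'.toLGraph.endOf Δ'.base q = w ∧
    Δ.toLGraph.pathLabel p = Δ'.toLGraph.pathLabel q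

lemma corr_symm {Δ Δ' : PLGraph X} {v : Δ.V} {w : Δ'.V} (h : corr Δ Δ' v w) :
    corr Δ' Δ w v := by
  obtain ⟨p, q, h1, h2, h3, h4, h5, h6, h7⟩ := h
  exact ⟨q, p, h4, h5, h6, h1, h2, h3, h7.symm⟩

lemma corr_base (Δ Δ' : PLGraph X) : corr Δ Δ' Δ.base Δ'.base :=
  ⟨[], [], trivial, List.isChain_nil, rfl, trivial, List.isChain_nil, rfl, rfl⟩

lemma corr_fun {Δ Δ' : PLGraph X} (hF' : Δ'.toLGraph.Folded)
    (hπ : Δ.pi1S = Δ'.pi1S) {v : Δ.V} {w w' : Δ'.V}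
    (h : corr Δ Δ' v w) (h' : corr Δ Δ' v w') : w = w' := by
  obtain ⟨p, q, hp, hrp, hep, hq, hrq, heq, hl⟩ := h
  obtain ⟨p', q', hp', hrp', hep', hq', hrq', heq', hl'⟩ := h'
  -- a closed chain p ++ barRev p' at the base of Δ
  obtain ⟨hb1, hb2⟩ := LGraph.chain_barRev hp'
  rw [hep'] at hb1 hb2
  have hcl : Δ.toLGraph.chain Δ.base (p ++ Δ.toLGraph.barRev p') := by
    rw [LGraph.chain_append, hep]
    exact ⟨hp, hb1⟩
  have hecl : Δ.toLGraph.endOf Δ.base (p ++ Δ.toLGraph.barRev p') = Δ.base := by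
    rw [LGraph.endOf_append, hep]
    exact hb2
  have hmem : Δ.toLGraph.pathLabel p * (Δ.toLGraph.pathLabel p')⁻¹ ∈ Δ.pi1S :=
    ⟨p ++ Δ.toLGraph.barRev p', hcl, hecl,
      by rw [LGraph.pathLabel_append, LGraph.pathLabel_barRev]⟩
  rw [hπ] at hmem
  obtain ⟨K₀, hK₀c, hK₀e, hK₀l⟩ := hmem
  obtain ⟨K, hKc, hKe, _, hKl, _⟩ := LGraph.reducePath hK₀c
  rw [hK₀e] at hKe
  have hMc : Δ'.toLGraph.chain Δ'.base (K ++ q') := by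
    rw [LGraph.chain_append, hKe]
    exact ⟨hKc, hq'⟩
  have hMe : Δ'.toLGraph.endOf Δ'.base (K ++ q') = w' := by
    rw [LGraph.endOf_append, hKe]
    exact heq'
  have hMl : Δ'.toLGraph.pathLabel (K ++ q') = Δ'.toLGraph.pathLabel q := by
    rw [LGraph.pathLabel_append, hKl, hK₀l, ← hl', ← hl]
    group
  obtain ⟨M, hMc', hMe', hMr', hMl', _⟩ := LGraph.reducePath hMc
  have : M = q := LGraph.chain_eq_of_pathLabel hF' hMc' hq hMr' hrq (by rw [hMl', hMl])
  rw [← heq, ← this, hMe', hMe]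

lemma corr_shadow {Δ Δ' : PLGraph X} (hF : Δ.toLGraph.Folded) (hF' : Δ'.toLGraph.Folded)
    (hπ : Δ.pi1S = Δ'.pi1S) {C : List Δ.E} (hc : Δ.toLGraph.chain Δ.base C)
    (hr : Δ.toLGraph.Reduced C) (he : Δ.toLGraph.endOf Δ.base C = Δ.base) :
    ∃ C', Δ'.toLGraph.chain Δ'.base C' ∧ Δ'.toLGraph.Reduced C' ∧
      Δ'.toLGraph.endOf Δ'.base C' = Δ'.base ∧
      C'.map Δ'.toLGraph.lab = C.map Δ.toLGraph.lab := by
  have hmem : Δ.toLGraph.pathLabel C ∈ Δ.pi1S := ⟨C, hc, he, rfl⟩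
  rw [hπ] at hmem
  obtain ⟨K₀, h1, h2, h3⟩ := hmem
  obtain ⟨C', hc', he', hr', hl', _⟩ := LGraph.reducePath h1
  rw [h2] at he'
  refine ⟨C', hc', hr', he', ?_⟩
  apply mk_inj_of_NR (LGraph.NR_of_reduced hF' hc' hr') (LGraph.NR_of_reduced hF hc hr)
  rw [← LGraph.pathLabel_eq_mk, ← LGraph.pathLabel_eq_mk, hl', h3]

lemma corr_prefix {Δ Δ' : PLGraph X} {C : List Δ.E} {C' : List Δ'.E}
    (hc : Δ.toLGraph.chain Δ.base C) (hr : Δ.toLGraph.Reduced C)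
    (hc' : Δ'.toLGraph.chain Δ'.base C') (hr' : Δ'.toLGraph.Reduced C')
    (hw : C'.map Δ'.toLGraph.lab = C.map Δ.toLGraph.lab) (i : ℕ) :
    corr Δ Δ' (Δ.toLGraph.endOf Δ.base (C.take i)) (Δ'.toLGraph.endOf Δ'.base (C'.take i)) := by
  have h1 : Δ.toLGraph.chain Δ.base (C.take i) := by
    have : Δ.toLGraph.chain Δ.base (C.take i ++ C.drop i) := by
      rw [List.take_append_drop]
      exact hc
    exact (LGraph.chain_append.mp this).1
  have h1' : Δ'.toLGraph.chain Δ'.base (C'.take i) := by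
    have : Δ'.toLGraph.chain Δ'.base (C'.take i ++ C'.drop i) := by
      rw [List.take_append_drop]
      exact hc'
    exact (LGraph.chain_append.mp this).1
  refine ⟨C.take i, C'.take i, h1, hr.take i, rfl, h1', hr'.take i, rfl, ?_⟩
  rw [LGraph.pathLabel_eq_mk, LGraph.pathLabel_eq_mk, List.map_take, List.map_take, hw]

lemma corr_ext {Δ Δ' : PLGraph X} (hcore : Δ.IsCore) (hF' : Δ'.toLGraph.Folded)
    (hπ : Δ.pi1S = Δ'.pi1S) {v : Δ.V} {w : Δ'.V} (hvw : corr Δ Δ' v w)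
    (d : Δ.E) (hd : Δ.toLGraph.init d = v) :
    ∃ x : Δ'.E, Δ'.toLGraph.init x = w ∧ Δ'.toLGraph.lab x = Δ.toLGraph.lab d ∧
      corr Δ Δ' (Δ.toLGraph.term d) (Δ'.toLGraph.term x) := by
  obtain ⟨hF, hconn, hedges⟩ := hcore
  obtain ⟨C, hCc, hCe, hCr, hCd⟩ := hedges d
  obtain ⟨C₁, C₂, rfl⟩ := List.append_of_mem hCd
  obtain ⟨C', hC'c, hC'r, hC'e, hword⟩ := corr_shadow hF hF' hπ hCc hCr hCe
  set i := C₁.length with hidef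
  have hlencc : C'.length = C₁.length + (C₂.length + 1) := by
    have := congrArg List.length hword
    simpa using this
  have hi : i < C'.length := by omega
  obtain ⟨x, D₂, hD⟩ : ∃ x D₂, C'.drop i = x :: D₂ := by
    cases hD : C'.drop i with
    | nil =>
      have := congrArg List.length hD
      rw [List.length_drop] at this
      simp at this
      omega
    | cons a b => exact ⟨a, b, rfl⟩
  have hC'split : C' = C'.take i ++ x :: D₂ := by
    rw [← hD, List.take_append_drop]
  -- the vertex before d is v
  have hbefore : Δ.toLGraph.init d = Δ.toLGraph.endOf Δ.base C₁ := by
    rw [LGraph.chain_append] at hCc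
    exact hCc.2.1
  -- prefix correspondence at i
  have hpre := corr_prefix hCc hCr hC'c hC'r hword i
  have htakeC : (C₁ ++ d :: C₂).take i = C₁ := List.take_left
  rw [htakeC] at hpre
  have hw' : w = Δ'.toLGraph.endOf Δ'.base (C'.take i) := by
    apply corr_fun hF' hπ hvw
    rw [← hd, hbefore]
    exact hpre
  -- the initial vertex of x
  have hinitx : Δ'.toLGraph.init x = Δ'.toLGraph.endOf Δ'.base (C'.take i) := by
    have : Δ'.toLGraph.chain Δ'.base (C'.take i ++ x :: D₂) := by
      rw [← hC'split]
      exact hC'c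
    rw [LGraph.chain_append] at this
    exact this.2.1
  -- the label of x
  have hlabx : Δ'.toLGraph.lab x = Δ.toLGraph.lab d := by
    have hstep := congrArg (List.drop i) hword
    rw [← List.map_drop, ← List.map_drop, hD, hidef, List.drop_left] at hstep
    simp only [List.map_cons, List.cons.injEq] at hstep
    exact hstep.1
  -- prefix correspondence at i+1
  have hpre2 := corr_prefix hCc hCr hC'c hC'r hword (i + 1)
  have htake2 : (C₁ ++ d :: C₂).take (i + 1) = C₁ ++ [d] := by
    have hassoc : C₁ ++ d :: C₂ = (C₁ ++ [d]) ++ C₂ := by simp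
    rw [hassoc]
    apply List.take_left'
    simp [hidef]
  have htake2' : C'.take (i + 1) = C'.take i ++ [x] := by
    conv_lhs => rw [hC'split]
    have hassoc : C'.take i ++ x :: D₂ = (C'.take i ++ [x]) ++ D₂ := by simp
    rw [hassoc]
    apply List.take_left'
    rw [List.length_append, List.length_take, min_eq_left (le_of_lt hi)]
    simp
  rw [htake2, htake2'] at hpre2
  rw [LGraph.endOf_append, LGraph.endOf_append] at hpre2
  rw [LGraph.endOf_cons, LGraph.endOf_nil, LGraph.endOf_cons, LGraph.endOf_nil] at hpre2
  exact ⟨x, by rw [hinitx, ← hw'], hlabx, hpre2⟩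

lemma corr_total {Δ Δ' : PLGraph X} (hcore : Δ.IsCore) (hF' : Δ'.toLGraph.Folded)
    (hπ : Δ.pi1S = Δ'.pi1S) : ∀ v : Δ.V, ∃ w, corr Δ Δ' v w := by
  have key : ∀ (p : List Δ.E) (u : Δ.V), Δ.toLGraph.chain u p → (∃ w, corr Δ Δ' u w) →
      ∃ w', corr Δ Δ' (Δ.toLGraph.endOf u p) w' := by
    intro p
    induction p with
    | nil => exact fun u _ h => h
    | cons d p ih =>
      rintro u hc ⟨w, hw⟩
      obtain ⟨x, _, _, hx⟩ := corr_ext hcore hF' hπ hw d hc.1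
      exact ih _ hc.2 ⟨_, hx⟩
  intro v
  obtain ⟨p, hp, he⟩ := hcore.2.1 Δ.base v
  rw [← he]
  exact key p Δ.base hp ⟨Δ'.base, corr_base Δ Δ'⟩

/-- Rigidity: two pointed core graphs with the same `π₁` are isomorphic. -/
theorem iso_of_cores (Δ Δ' : PLGraph X) (hcore : Δ.IsCore) (hcore' : Δ'.IsCore)
    (hπ : Δ.pi1S = Δ'.pi1S) :
    ∃ h : PHom Δ Δ', Function.Bijective h.mapV ∧ Function.Bijective h.mapE := by
  classical
  have hF : Δ.toLGraph.Folded := hcore.1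
  have hF' : Δ'.toLGraph.Folded := hcore'.1
  choose mV hmV using corr_total hcore hF' hπ
  have ext : ∀ d : Δ.E, ∃ x : Δ'.E, Δ'.toLGraph.init x = mV (Δ.toLGraph.init d) ∧
      Δ'.toLGraph.lab x = Δ.toLGraph.lab d ∧
      corr Δ Δ' (Δ.toLGraph.term d) (Δ'.toLGraph.term x) :=
    fun d => corr_ext hcore hF' hπ (hmV (Δ.toLGraph.init d)) d rfl
  choose mE hE1 hE2 hE3 using ext
  have hterm : ∀ d, Δ'.toLGraph.term (mE d) = mV (Δ.toLGraph.term d) :=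
    fun d => corr_fun hF' hπ (hE3 d) (hmV (Δ.toLGraph.term d))
  have hmapbar : ∀ d, Δ'.toLGraph.bar (mE d) = mE (Δ.toLGraph.bar d) := by
    intro d
    apply (hF' (mE (Δ.toLGraph.bar d)) (Δ'.toLGraph.bar (mE d)) ?_ ?_).symm
    · show Δ'.toLGraph.init (mE (Δ.toLGraph.bar d)) = Δ'.toLGraph.term (mE d)
      rw [hE1 (Δ.toLGraph.bar d), hterm d]
      rfl
    · rw [hE2 (Δ.toLGraph.bar d), Δ.toLGraph.lab_bar, Δ'.toLGraph.lab_bar, hE2 d]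
  have hbase : mV Δ.base = Δ'.base := corr_fun hF' hπ (hmV Δ.base) (corr_base Δ Δ')
  -- injectivity and surjectivity of mV
  have hVinj : Function.Injective mV := by
    intro v v' hv
    apply corr_fun hF hπ.symm (corr_symm (hmV v))
    rw [hv]
    exact corr_symm (hmV v')
  have hVsurj : Function.Surjective mV := by
    intro w
    obtain ⟨v, hv⟩ := corr_total hcore' hF hπ.symm w
    exact ⟨v, (corr_fun hF' hπ (corr_symm hv) (hmV v)).symm⟩
  have hEinj : Function.Injective mE := by
    intro d d' hd
    apply hF
    · apply hVinj
      rw [← hE1 d, ← hE1 d', hd]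
    · rw [← hE2 d, ← hE2 d', hd]
  have hEsurj : Function.Surjective mE := by
    intro x
    obtain ⟨v, hv⟩ := hVsurj (Δ'.toLGraph.init x)
    have hcx : corr Δ' Δ (Δ'.toLGraph.init x) v := by
      rw [← hv]
      exact corr_symm (hmV v)
    obtain ⟨dd, hdd1, hdd2, _⟩ := corr_ext hcore' hF hπ.symm hcx x rfl
    refine ⟨dd, ?_⟩
    apply hF'
    · rw [hE1 dd, hdd1, hv]
    · rw [hE2 dd, hdd2]
  refine ⟨{ mapV := mV
            mapE := mE
            map_init := hE1
            map_bar := hmapbar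
            map_lab := hE2
            map_base := hbase }, ⟨hVinj, hVsurj⟩, ⟨hEinj, hEsurj⟩⟩

end PLGraph
/-- For a finite connected pointed labeled graph, folding and
trimming terminate (no infinite chain of steps), some terminal graph is
reached, every terminal graph is a folded core graph, and the terminal graph
is independent (up to isomorphism) of the order of operations. -/
theorem stmt18 {X : Type} (Γ : PLGraph X) (hE : Finite Γ.E) (hV : Finite Γ.V)
    (hc : Γ.toLGraph.Connected) :
    (¬ ∃ g : ℕ → PLGraph X, g 0 = Γ ∧ ∀ n, PStep (g n) (g (n + 1))) ∧
    (∃ Δ, Relation.ReflTransGen PStep Γ Δ ∧ (∀ Ξ, ¬ PStep Δ Ξ) ∧ Δ.IsCore) ∧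
    (∀ Δ Δ', Relation.ReflTransGen PStep Γ Δ → Relation.ReflTransGen PStep Γ Δ' →
      (∀ Ξ, ¬ PStep Δ Ξ) → (∀ Ξ, ¬ PStep Δ' Ξ) →
      ∃ h : PHom Δ Δ', Function.Bijective h.mapV ∧ Function.Bijective h.mapE) := by
  refine ⟨no_infinite_chain Γ hE, ?_, ?_⟩
  · obtain ⟨Δ, h1, h2, h3, h4, h5, h6⟩ := exists_terminal Γ hE hV hc
    haveI := h4
    exact ⟨Δ, h1, h2, Δ.isCore_of_terminal h5 h2⟩
  · intro Δ Δ' hΔ hΔ' ht ht'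
    obtain ⟨e1, v1, c1, p1⟩ := reach_invariants hΔ hE hV hc
    obtain ⟨e2, v2, c2, p2⟩ := reach_invariants hΔ' hE hV hc
    haveI := v1
    haveI := v2
    exact PLGraph.iso_of_cores Δ Δ' (Δ.isCore_of_terminal c1 ht)
      (Δ'.isCore_of_terminal c2 ht') (p1.trans p2.symm)
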